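/- Let G be a finite group, N ⊴ G a normal subgroup, and suppose G acts faithfully and irreducibly on a vector space V with N containing the scalars Z and N/Z a non-Abelian simple group such that the centralizer C_G(N) is Abelian. If M/Z is any minimal normal subgroup of G/Z with M ≠ N and M/Z non-Abelian, then [M, N] = 1, which contradicts C_G(N) being Abelian; hence N/Z is the unique minimal normal subgroup of G/Z and G/Z is almost simple. -/

import Mathlib

open scoped commutatorElement

/-- Let `Z ≤ N ⊴ G` with `Z` central, `N/Z` non-Abelian simple,
and `C_G(N)` Abelian (as follows from a faithful irreducible linear action).
Then any normal subgroup `M` of `G` containing `Z` whose image `M/Z` is a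
non-Abelian minimal normal subgroup of `G/Z` must equal `N`; that is, `N/Z` is
the unique such minimal normal subgroup of `G/Z` (whence `G/Z` is almost
simple). -/
theorem stmt_9 {G : Type*} [Group G] [Finite G] (Z N : Subgroup G)
    [Z.Normal] [(Z.subgroupOf N).Normal] [N.Normal]
    (hZc : Z ≤ Subgroup.center G) (hZN : Z ≤ N)
    (hsimple : IsSimpleGroup (N ⧸ Z.subgroupOf N))
    (hnonab : ¬ ∀ a b : N ⧸ Z.subgroupOf N, a * b = b * a)
    (hcent : ∀ a ∈ Subgroup.centralizer (N : Set G),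
      ∀ b ∈ Subgroup.centralizer (N : Set G), a * b = b * a) :
    ∀ M : Subgroup G, M.Normal → Z ≤ M →
      (Subgroup.map (QuotientGroup.mk' Z) M ≠ ⊥) →
      (∀ K : Subgroup (G ⧸ Z), K.Normal →
        K ≤ Subgroup.map (QuotientGroup.mk' Z) M →
        K = ⊥ ∨ K = Subgroup.map (QuotientGroup.mk' Z) M) →
      (¬ ∀ a ∈ Subgroup.map (QuotientGroup.mk' Z) M,
        ∀ b ∈ Subgroup.map (QuotientGroup.mk' Z) M, a * b = b * a) →
      M = N := by
  intro M hMn hZM hne hmin hMnonab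
  haveI := hMn
  haveI := hsimple
  set π := QuotientGroup.mk' Z with hπ
  have hπs : Function.Surjective π := QuotientGroup.mk'_surjective Z
  have hNn : N.Normal := ‹N.Normal›
  have hkerπ : ∀ x : G, π x = 1 → x ∈ Z := fun x hx => by
    have : x ∈ π.ker := MonoidHom.mem_ker.mpr hx
    rwa [hπ, QuotientGroup.ker_mk'] at this
  have hKn : (Subgroup.map π (M ⊓ N)).Normal :=
    (Subgroup.normal_inf_normal M N).map π hπs
  rcases hmin _ hKn (Subgroup.map_mono inf_le_left) with hK | hK
  · -- M ⊓ N ≤ Z, derive M abelian, contradiction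
    exfalso
    have hMNZ : M ⊓ N ≤ Z := by
      intro x hx
      exact hkerπ x (by
        have : π x ∈ Subgroup.map π (M ⊓ N) := Subgroup.mem_map_of_mem π hx
        rwa [hK, Subgroup.mem_bot] at this)
    have hcom : ∀ m ∈ M, ∀ n ∈ N, ⁅m, n⁆ ∈ Z := by
      intro m hm n hn
      refine hMNZ ⟨?_, ?_⟩
      · have h1 : n * m⁻¹ * n⁻¹ ∈ M := hMn.conj_mem _ (inv_mem hm) n
        simpa [commutatorElement_def, mul_assoc] using mul_mem hm h1
      · have h2 : m * n * m⁻¹ ∈ N := hNn.conj_mem n hn m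
        simpa [commutatorElement_def, mul_assoc] using mul_mem h2 (inv_mem hn)
    have hMc : ∀ m ∈ M, m ∈ Subgroup.centralizer (N : Set G) := by
      intro m hm
      set f : N →* G :=
        { toFun := fun n => ⁅m, (n : G)⁆
          map_one' := by simp
          map_mul' := by
            intro a b
            have hz : (⁅m, (b : G)⁆ : G) ∈ Subgroup.center G :=
              hZc (hcom m hm b b.2)
            rw [Subgroup.mem_center_iff] at hz
            have hconj : (a : G) * ⁅m, (b : G)⁆ * (a : G)⁻¹ = ⁅m, (b : G)⁆ := by
              rw [hz, mul_assoc, mul_inv_cancel, mul_one]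
            calc (⁅m, ((a * b : N) : G)⁆ : G)
                = ⁅m, (a : G)⁆ * ((a : G) * ⁅m, (b : G)⁆ * (a : G)⁻¹) := by
                  simp only [commutatorElement_def, Subgroup.coe_mul]
                  group
              _ = ⁅m, (a : G)⁆ * ⁅m, (b : G)⁆ := by rw [hconj] } with hf
      have hker : Z.subgroupOf N ≤ f.ker := by
        intro n hn
        have hnc := Subgroup.mem_center_iff.mp (hZc hn)
        exact MonoidHom.mem_ker.mpr
          (commutatorElement_eq_one_iff_mul_comm.mpr (hnc m))
      set fbar := QuotientGroup.lift (Z.subgroupOf N) f hker with hfb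
      have hfbmk : ∀ n : N, fbar (QuotientGroup.mk n) = f n := fun n => rfl
      have hcommtop : ⁅(⊤ : Subgroup (N ⧸ Z.subgroupOf N)), (⊤ : Subgroup (N ⧸ Z.subgroupOf N))⁆ = (⊤ : Subgroup (N ⧸ Z.subgroupOf N)) := by
        rcases (Subgroup.commutator_normal (⊤ : Subgroup (N ⧸ Z.subgroupOf N)) ⊤).eq_bot_or_eq_top with h | h
        · exfalso
          apply hnonab
          intro a b
          have := Subgroup.commutator_le.mp h.le a trivial b trivial
          rwa [Subgroup.mem_bot, commutatorElement_eq_one_iff_mul_comm] at this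
        · exact h
      have hfbar1 : ∀ q, fbar q = 1 := by
        have htop : (⊤ : Subgroup (N ⧸ Z.subgroupOf N)) ≤ fbar.ker := by
          rw [← hcommtop]
          refine Subgroup.commutator_le.mpr fun g₁ _ g₂ _ => ?_
          refine MonoidHom.mem_ker.mpr ?_
          rw [map_commutatorElement]
          obtain ⟨n₁, rfl⟩ := QuotientGroup.mk_surjective g₁
          have h1 : fbar (QuotientGroup.mk n₁) ∈ Subgroup.center G := by
            rw [hfbmk]
            exact hZc (hcom m hm n₁ n₁.2)
          rw [Subgroup.mem_center_iff] at h1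
          exact commutatorElement_eq_one_iff_mul_comm.mpr (h1 _).symm
        exact fun q => MonoidHom.mem_ker.mp (htop trivial)
      refine Subgroup.mem_centralizer_iff.mpr fun n hn => ?_
      have : f ⟨n, hn⟩ = 1 := by rw [← hfbmk]; exact hfbar1 _
      have : ⁅m, n⁆ = 1 := this
      exact (commutatorElement_eq_one_iff_mul_comm.mp this).symm
    apply hMnonab
    rintro a ⟨x, hx, rfl⟩ b ⟨y, hy, rfl⟩
    rw [← map_mul, ← map_mul, hcent x (hMc x hx) y (hMc y hy)]
  · -- map π (M ⊓ N) = map π M : M ≤ N, then simplicity forces M = N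
    have hMleN : M ≤ N := by
      intro m hm
      have : π m ∈ Subgroup.map π (M ⊓ N) := by
        rw [hK]; exact Subgroup.mem_map_of_mem π hm
      obtain ⟨x, hx, hxm⟩ := this
      have : x⁻¹ * m ∈ Z := hkerπ _ (by rw [map_mul, map_inv, hxm, inv_mul_cancel])
      have := mul_mem hx.2 (hZN this)
      simpa using this
    haveI hMN : (M.subgroupOf N).Normal := hMn.subgroupOf N
    set ρ := QuotientGroup.mk' (Z.subgroupOf N) with hρ
    have hρs : Function.Surjective ρ := QuotientGroup.mk'_surjective _
    have hkerρ : ∀ x : N, ρ x = 1 → x ∈ Z.subgroupOf N := fun x hx => by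
      have : x ∈ ρ.ker := MonoidHom.mem_ker.mpr hx
      rwa [hρ, QuotientGroup.ker_mk'] at this
    have hQn : (Subgroup.map ρ (M.subgroupOf N)).Normal := hMN.map ρ hρs
    rcases hQn.eq_bot_or_eq_top with hQ | hQ
    · exfalso
      apply hne
      rw [eq_bot_iff]
      rintro a ⟨x, hx, rfl⟩
      have hxN : x ∈ N := hMleN hx
      have : ρ ⟨x, hxN⟩ ∈ Subgroup.map ρ (M.subgroupOf N) :=
        Subgroup.mem_map_of_mem ρ (by simpa [Subgroup.mem_subgroupOf] using hx)
      rw [hQ, Subgroup.mem_bot] at this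
      have hxZ : (⟨x, hxN⟩ : N) ∈ Z.subgroupOf N := hkerρ _ this
      rw [Subgroup.mem_subgroupOf] at hxZ
      simp only [Subgroup.mem_bot]
      exact MonoidHom.mem_ker.mp (by rw [hπ, QuotientGroup.ker_mk']; exact hxZ)
    · refine le_antisymm hMleN fun n hn => ?_
      have : ρ ⟨n, hn⟩ ∈ Subgroup.map ρ (M.subgroupOf N) := by
        rw [hQ]; trivial
      obtain ⟨x, hx, hxn⟩ := this
      have hx' : (x : G) ∈ M := hx
      have hz : x⁻¹ * ⟨n, hn⟩ ∈ Z.subgroupOf N :=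
        hkerρ _ (by rw [map_mul, map_inv, hxn, inv_mul_cancel])
      rw [Subgroup.mem_subgroupOf] at hz
      have := mul_mem hx' (hZM hz)
      simpa using this
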